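/- The space X_crs is metacompact (pointwise paracompact): every open cover of X_crs admits a point-finite open refinement. -/

import Mathlib

open Set Topology Filter

noncomputable section

/-- The closed unit disk. -/
def D : Type := {z : ℂ // ‖z‖ ≤ 1}

instance : TopologicalSpace D := instTopologicalSpaceSubtype

/-- The wedge point on each disk. -/
def basept : D := ⟨1, by norm_num⟩

/-- The outer point (outer 0-cell) on each disk. -/
def outerpt : D := ⟨-1, by norm_num⟩

/-- Wedge relation: glue all copies of the base point together. -/
def wsetoid : Setoid (ℕ × D) where
  r p q := p = q ∨ (p.2 = basept ∧ q.2 = basept)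
  iseqv := by
    constructor
    · intro p; exact Or.inl rfl
    · rintro p q (rfl | ⟨h1, h2⟩)
      · exact Or.inl rfl
      · exact Or.inr ⟨h2, h1⟩
    · rintro p q r (rfl | ⟨h1, h2⟩) (rfl | ⟨h3, h4⟩)
      · exact Or.inl rfl
      · exact Or.inr ⟨h3, h4⟩
      · exact Or.inr ⟨h1, h2⟩
      · exact Or.inr ⟨h1, h4⟩

/-- The wedge of countably many closed 2-disks, with the weak (CW) topology. -/
def X : Type := Quotient wsetoid

instance : TopologicalSpace X := instTopologicalSpaceQuotient

/-- The point of the `n`-th disk with disk-coordinate `z`. -/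
def pt (n : ℕ) (z : D) : X := Quotient.mk wsetoid (n, z)

/-- The origin (the wedge point `x`). -/
def origin : X := pt 0 basept

/-- The outer 0-cell `e_n^0` of the `n`-th disk. -/
def outer (n : ℕ) : X := pt n outerpt

/-- The `n`-th closed 2-cell `C_n`. -/
def cell (n : ℕ) : Set X := Set.range (pt n)

/-- The open sets of the coarser topology `τ`: CW-open sets which either do not
contain the origin, or contain all but finitely many punctured cells `C_n \ {e_n^0}`. -/
def crsOpen (U : Set X) : Prop :=
  IsOpen U ∧ (origin ∉ U ∨ {n : ℕ | ¬ (cell n \ {outer n} ⊆ U)}.Finite)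

/-- The coarser topology `τ` on the wedge of disks. -/
def crsTop : TopologicalSpace X where
  IsOpen := crsOpen
  isOpen_univ := ⟨isOpen_univ, Or.inr (Set.Finite.subset Set.finite_empty
    (fun _ hn => absurd (Set.subset_univ _) hn))⟩
  isOpen_inter := by
    rintro U V ⟨hU, hU2⟩ ⟨hV, hV2⟩
    refine ⟨hU.inter hV, ?_⟩
    by_cases hx : origin ∈ U ∩ V
    · have h1 := hU2.resolve_left (fun h => h hx.1)
      have h2 := hV2.resolve_left (fun h => h hx.2)
      refine Or.inr ((h1.union h2).subset ?_)
      intro n hn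
      by_contra hc
      simp only [Set.mem_union, Set.mem_setOf_eq, not_or, not_not] at hc
      exact hn (Set.subset_inter hc.1 hc.2)
    · exact Or.inl hx
  isOpen_sUnion := by
    intro S hS
    refine ⟨isOpen_sUnion fun U hU => (hS U hU).1, ?_⟩
    by_cases hx : origin ∈ ⋃₀ S
    · obtain ⟨U, hUS, hxU⟩ := hx
      have h1 := (hS U hUS).2.resolve_left (fun h => h hxU)
      refine Or.inr (h1.subset ?_)
      intro n hn hsub
      exact hn (hsub.trans (Set.subset_sUnion_of_mem hUS))
    · exact Or.inl hx

lemma pt_eq_iff {n m : ℕ} {z w : D} :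
    pt n z = pt m w ↔ (n, z) = (m, w) ∨ (z = basept ∧ w = basept) :=
  ⟨fun h => Quotient.eq.mp h, fun h => Quotient.sound h⟩

lemma pt_basept (m : ℕ) : pt m basept = origin :=
  Quotient.sound (Or.inr ⟨rfl, rfl⟩)

lemma pt_eq_origin_iff {m : ℕ} {z : D} : pt m z = origin ↔ z = basept := by
  constructor
  · intro h
    rcases pt_eq_iff.mp h with h | h
    · exact (Prod.ext_iff.mp h).2
    · exact h.1
  · rintro rfl; exact pt_basept m

instance : CompactSpace D := by
  have h : IsCompact {z : ℂ | ‖z‖ ≤ 1} := by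
    have h2 := isCompact_closedBall (0 : ℂ) 1
    convert h2 using 1
    ext z
    simp [Metric.mem_closedBall, dist_zero_right]
  exact isCompact_iff_compactSpace.mp h

lemma ne_basept_open : IsOpen {z : D | z ≠ basept} := by
  have : {z : D | z ≠ basept} = (Subtype.val : D → ℂ) ⁻¹' {(1 : ℂ)}ᶜ := by
    ext z
    simp only [Set.mem_setOf_eq, Set.mem_preimage, Set.mem_compl_iff, Set.mem_singleton_iff]
    constructor
    · intro h hz; exact h (Subtype.ext hz)
    · intro h hz; exact h (congrArg Subtype.val hz)
  rw [this]
  exact (isOpen_compl_singleton).preimage continuous_subtype_val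

lemma cell_minus_open (n : ℕ) : IsOpen (cell n \ {origin}) := by
  change IsOpen (Quotient.mk wsetoid ⁻¹' (cell n \ {origin}))
  have : Quotient.mk wsetoid ⁻¹' (cell n \ {origin})
      = {n} ×ˢ {z : D | z ≠ basept} := by
    ext ⟨m, z⟩
    simp only [Set.mem_preimage, Set.mem_diff, Set.mem_singleton_iff, Set.mem_prod,
      Set.mem_setOf_eq]
    constructor
    · rintro ⟨⟨w, hw⟩, hne⟩
      have hz : z ≠ basept := fun hz => hne (pt_eq_origin_iff.mpr hz)
      rcases pt_eq_iff.mp hw with h | h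
      · exact ⟨(Prod.ext_iff.mp h).1.symm, hz⟩
      · exact absurd h.2 hz
    · rintro ⟨rfl, hz⟩
      exact ⟨⟨z, rfl⟩, fun h => hz (pt_eq_origin_iff.mp h)⟩
  rw [this]
  exact (isOpen_discrete _).prod ne_basept_open

lemma pt_continuous (n : ℕ) : Continuous[_, crsTop] (pt n) := by
  rw [continuous_def]
  intro U hU
  have h1 : IsOpen U := hU.1
  have : Continuous (pt n) := by
    have : Continuous (fun z : D => Quotient.mk wsetoid (n, z)) :=
      continuous_quotient_mk'.comp (Continuous.prodMk_right n)
    exact this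
  exact this.isOpen_preimage U h1

lemma cell_compact (n : ℕ) : @IsCompact X crsTop (cell n) :=
  @isCompact_range D X _ crsTop _ _ (pt_continuous n)

lemma mem_cell_eq {n m : ℕ} {z : D} (h : pt m z ∈ cell n) (hne : pt m z ≠ origin) :
    n = m := by
  obtain ⟨w, hw⟩ := h
  rcases pt_eq_iff.mp hw with h | h
  · exact (Prod.ext_iff.mp h).1
  · exact absurd (pt_eq_origin_iff.mpr h.2) hne

/-- `X_crs` is metacompact: every open cover admits a point-finite open
refinement. -/
theorem crs_metacompact :
    ∀ (ι : Type) (C : ι → Set X), (∀ i, IsOpen[crsTop] (C i)) → (⋃ i, C i) = Set.univ →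
      ∃ R : Set (Set X),
        (∀ V ∈ R, IsOpen[crsTop] V) ∧ ⋃₀ R = Set.univ ∧
        (∀ V ∈ R, ∃ i, V ⊆ C i) ∧
        ∀ y : X, {V ∈ R | y ∈ V}.Finite := by
  intro ι C hC hcov
  -- pick the member containing the origin
  have horig : origin ∈ ⋃ i, C i := hcov ▸ Set.mem_univ _
  obtain ⟨i₀, hi₀⟩ := Set.mem_iUnion.mp horig
  -- for each n, a finite subcover of the compact cell n
  have hsub : ∀ n : ℕ, ∃ t : Finset ι, cell n ⊆ ⋃ i ∈ t, C i := by
    intro n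
    exact @IsCompact.elim_finite_subcover X crsTop (cell n) ι (cell_compact n) C hC
      (hcov ▸ Set.subset_univ _)
  choose s hs using hsub
  refine ⟨insert (C i₀) {S | ∃ n, ∃ i ∈ s n, S = C i ∩ (cell n \ {origin})}, ?_, ?_, ?_, ?_⟩
  · rintro V (rfl | ⟨n, i, hi, rfl⟩)
    · exact hC i₀
    · refine ⟨(hC i).1.inter (cell_minus_open n), Or.inl ?_⟩
      rintro ⟨-, -, h⟩
      exact h rfl
  · apply Set.eq_univ_of_forall
    intro y
    obtain ⟨⟨m, z⟩, rfl⟩ := Quotient.exists_rep y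
    by_cases hz : z = basept
    · subst hz
      refine ⟨C i₀, Set.mem_insert _ _, ?_⟩
      show pt m basept ∈ C i₀
      rw [pt_basept m]; exact hi₀
    · have hmem : pt m z ∈ cell m := ⟨z, rfl⟩
      obtain ⟨i, hi, hyi⟩ := Set.mem_iUnion₂.mp (hs m hmem)
      refine ⟨C i ∩ (cell m \ {origin}), Set.mem_insert_of_mem _ ⟨m, i, hi, rfl⟩,
        hyi, hmem, fun h => hz (pt_eq_origin_iff.mp h)⟩
  · rintro V (rfl | ⟨n, i, hi, rfl⟩)
    · exact ⟨i₀, subset_rfl⟩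
    · exact ⟨i, Set.inter_subset_left⟩
  · intro y
    obtain ⟨⟨m, z⟩, rfl⟩ := Quotient.exists_rep y
    have : {V ∈ insert (C i₀) {S | ∃ n, ∃ i ∈ s n, S = C i ∩ (cell n \ {origin})} |
        pt m z ∈ V} ⊆
        insert (C i₀) ((fun i => C i ∩ (cell m \ {origin})) '' (s m : Set ι)) := by
      rintro V ⟨(rfl | ⟨n, i, hi, rfl⟩), hyV⟩
      · exact Set.mem_insert _ _
      · have hne : pt m z ≠ origin := fun h => hyV.2.2 h
        have hnm : n = m := mem_cell_eq hyV.2.1 hne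
        subst hnm
        exact Set.mem_insert_of_mem _ ⟨i, hi, rfl⟩
    exact Set.Finite.subset (((s m).finite_toSet.image _).insert _) this

end
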